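/- For n agents with identical monotone cost function c (c(∅)=0), an EFX complete allocation of the chores always exists. In particular, the Add-and-Fix procedure—repeatedly adding an unassigned chore to a minimum-cost agent's bundle and removing chores from that bundle while some removal leaves its cost above the second-minimum cost—maintains the EFX property and terminates with a complete EFX allocation. -/

import Mathlib

/-- `A` is a complete allocation (partition) of the chores `Fin m` among `n` agents. -/
def IsPartition {n m : ℕ} (A : Fin n → Finset (Fin m)) : Prop :=
  (∀ i j : Fin n, i ≠ j → Disjoint (A i) (A j)) ∧
    Finset.univ.biUnion A = (Finset.univ : Finset (Fin m))

/-- for `n` agents with an identical monotone cost function `c`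
(with `c ∅ = 0`), an EFX complete allocation of the chores always exists:
for every pair of agents `i, j` with `A i ≠ ∅` and every chore `t ∈ A i`,
`c (A i \ {t}) ≤ c (A j)`. -/
theorem exists_efx_allocation_identical_monotone (n m : ℕ) (hn : 1 ≤ n)
    (c : Finset (Fin m) → ℝ)
    (hnn : ∀ S, 0 ≤ c S)
    (hmono : ∀ S T : Finset (Fin m), S ⊆ T → c S ≤ c T)
    (h0 : c ∅ = 0) :
    ∃ A : Fin n → Finset (Fin m), IsPartition A ∧
      ∀ i j : Fin n, A i ≠ ∅ → ∀ t ∈ A i, c ((A i).erase t) ≤ c (A j) := by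
  classical
  rcases eq_or_lt_of_le hn with h1 | h2
  · -- trivial case n = 1
    have : n = 1 := h1.symm
    subst this
    refine ⟨fun _ => Finset.univ, ⟨?_, ?_⟩, ?_⟩
    · intro i j hij
      exact absurd (Subsingleton.elim i j) hij
    · apply Finset.eq_univ_iff_forall.mpr
      intro x
      exact Finset.mem_biUnion.mpr ⟨0, Finset.mem_univ _, Finset.mem_univ _⟩
    · intro i j _ t _
      exact hmono _ _ (Finset.erase_subset _ _)
  · -- main case n ≥ 2
    set P : Finset (Fin n → Finset (Fin m)) := Finset.univ.filter (fun A =>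
      (∀ i j : Fin n, i ≠ j → Disjoint (A i) (A j)) ∧
      ∀ i j : Fin n, A i ≠ ∅ → ∀ t ∈ A i, c ((A i).erase t) ≤ c (A j)) with hPdef
    have hP0 : (fun _ => (∅ : Finset (Fin m))) ∈ P := by
      refine Finset.mem_filter.mpr ⟨Finset.mem_univ _, ⟨fun i j _ => by simp,
        fun i j hi => absurd rfl hi⟩⟩
    obtain ⟨A, hAP, hmax⟩ := P.exists_max_image
      (fun A => toLex ((∑ j, c (A j), ∑ j, (A j).card) : ℝ × ℕ)) ⟨_, hP0⟩
    obtain ⟨hdisj, hefx⟩ := (Finset.mem_filter.mp hAP).2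
    refine ⟨A, ⟨hdisj, ?_⟩, hefx⟩
    by_contra hcomp
    -- there is an unassigned chore e
    have hex : ∃ e : Fin m, ∀ j, e ∉ A j := by
      by_contra h
      push_neg at h
      apply hcomp
      apply Finset.eq_univ_iff_forall.mpr
      intro x
      obtain ⟨j, hj⟩ := h x
      exact Finset.mem_biUnion.mpr ⟨j, Finset.mem_univ j, hj⟩
    obtain ⟨e, he⟩ := hex
    -- i : a minimum-cost agent
    obtain ⟨i, -, hi⟩ := Finset.exists_min_image Finset.univ (fun j => c (A j))
      ⟨⟨0, by omega⟩, Finset.mem_univ _⟩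
    have hne : (Finset.univ.erase i : Finset (Fin n)).Nonempty := by
      rw [← Finset.card_pos, Finset.card_erase_of_mem (Finset.mem_univ i),
        Finset.card_univ, Fintype.card_fin]
      omega
    -- j₀ : a second-minimum-cost agent
    obtain ⟨j₀, hj₀mem, hj₀⟩ := Finset.exists_min_image (Finset.univ.erase i)
      (fun j => c (A j)) hne
    have hνi : c (A i) ≤ c (A j₀) := hi j₀ (Finset.mem_univ _)
    -- construct the fixed bundle B
    have hB : ∃ B : Finset (Fin m), B ⊆ insert e (A i) ∧
        (∀ t ∈ B, c (B.erase t) ≤ c (A j₀)) ∧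
        (c (A i) < c B ∨ (c (A i) ≤ c B ∧ (A i).card < B.card)) := by
      by_cases hcase : ∀ t ∈ insert e (A i), c ((insert e (A i)).erase t) ≤ c (A j₀)
      · refine ⟨insert e (A i), subset_rfl, hcase, Or.inr ⟨hmono _ _ (Finset.subset_insert _ _), ?_⟩⟩
        rw [Finset.card_insert_of_notMem (he i)]
        omega
      · push_neg at hcase
        obtain ⟨t0, ht0, hgt⟩ := hcase
        set F := (insert e (A i)).powerset.filter (fun B => c (A j₀) < c B) with hFdef
        have hFne : F.Nonempty :=
          ⟨_, Finset.mem_filter.mpr ⟨Finset.mem_powerset.mpr (Finset.erase_subset _ _), hgt⟩⟩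
        obtain ⟨B, hBF, hBmin⟩ := Finset.exists_min_image F Finset.card hFne
        obtain ⟨hBsub, hBgt⟩ := Finset.mem_filter.mp hBF
        have hBsub' := Finset.mem_powerset.mp hBsub
        refine ⟨B, hBsub', ?_, Or.inl (lt_of_le_of_lt hνi hBgt)⟩
        intro t ht
        by_contra hbad
        push_neg at hbad
        have hmem : B.erase t ∈ F := Finset.mem_filter.mpr
          ⟨Finset.mem_powerset.mpr ((Finset.erase_subset _ _).trans hBsub'), hbad⟩
        have := hBmin _ hmem
        have hc : (B.erase t).card < B.card := Finset.card_erase_lt_of_mem ht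
        omega
    obtain ⟨B, hBsub, hBerase, hBgain⟩ := hB
    have hBle : c (A i) ≤ c B := by
      rcases hBgain with h | ⟨h, -⟩
      · exact le_of_lt h
      · exact h
    set A' := Function.update A i B with hA'def
    -- A' is pairwise disjoint
    have key : ∀ r, r ≠ i → Disjoint B (A r) := by
      intro r hr
      refine Finset.disjoint_left.mpr ?_
      intro x hxB hxr
      rcases Finset.mem_insert.mp (hBsub hxB) with h | h
      · exact he r (h ▸ hxr)
      · exact (Finset.disjoint_left.mp (hdisj i r (Ne.symm hr)) h) hxr
    have hup : ∀ p : Fin n, p = i → A' p = B := by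
      intro p hp
      rw [hA'def, hp, Function.update_self]
    have hup' : ∀ p : Fin n, p ≠ i → A' p = A p := by
      intro p hp
      rw [hA'def, Function.update_of_ne hp]
    have hA'disj : ∀ p q : Fin n, p ≠ q → Disjoint (A' p) (A' q) := by
      intro p q hpq
      by_cases hpi : p = i
      · have hqi : q ≠ i := fun h => hpq (hpi.trans h.symm)
        rw [hup p hpi, hup' q hqi]
        exact key q hqi
      · by_cases hqi : q = i
        · rw [hup q hqi, hup' p hpi]
          exact (key p hpi).symm
        · rw [hup' p hpi, hup' q hqi]
          exact hdisj p q hpq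
    -- A' is EFX
    have hA'efx : ∀ p q : Fin n, A' p ≠ ∅ → ∀ t ∈ A' p, c ((A' p).erase t) ≤ c (A' q) := by
      intro p q hp t ht
      by_cases hpi : p = i
      · rw [hup p hpi] at ht ⊢
        by_cases hqi : q = i
        · rw [hup q hqi]
          exact hmono _ _ (Finset.erase_subset _ _)
        · rw [hup' q hqi]
          exact le_trans (hBerase t ht) (hj₀ q (Finset.mem_erase.mpr ⟨hqi, Finset.mem_univ _⟩))
      · rw [hup' p hpi] at ht ⊢
        have hApne : A p ≠ ∅ := Finset.ne_empty_of_mem ht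
        by_cases hqi : q = i
        · rw [hup q hqi]
          exact le_trans (hefx p i hApne t ht) hBle
        · rw [hup' q hqi]
          exact hefx p q hApne t ht
    have hA'P : A' ∈ P := Finset.mem_filter.mpr ⟨Finset.mem_univ _, hA'disj, hA'efx⟩
    -- potential strictly increases
    have hsum0 : ∑ j, c (A j) = c (A i) + ∑ j ∈ Finset.univ.erase i, c (A j) :=
      (Finset.add_sum_erase _ _ (Finset.mem_univ i)).symm
    have hcsum0 : ∑ j, (A j).card = (A i).card + ∑ j ∈ Finset.univ.erase i, (A j).card :=
      (Finset.add_sum_erase _ _ (Finset.mem_univ i)).symm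
    have hsum1 : ∑ j, c (A' j) = c B + ∑ j ∈ Finset.univ.erase i, c (A j) := by
      rw [← Finset.add_sum_erase _ (fun j => c (A' j)) (Finset.mem_univ i)]
      congr 1
      · rw [hup i rfl]
      · exact Finset.sum_congr rfl fun x hx => by rw [hup' x (Finset.mem_erase.mp hx).1]
    have hcsum1 : ∑ j, (A' j).card = B.card + ∑ j ∈ Finset.univ.erase i, (A j).card := by
      rw [← Finset.add_sum_erase _ (fun j => (A' j).card) (Finset.mem_univ i)]
      congr 1
      · rw [hup i rfl]
      · exact Finset.sum_congr rfl fun x hx => by rw [hup' x (Finset.mem_erase.mp hx).1]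
    have hlt : toLex ((∑ j, c (A j), ∑ j, (A j).card) : ℝ × ℕ)
        < toLex ((∑ j, c (A' j), ∑ j, (A' j).card) : ℝ × ℕ) := by
      rw [Prod.Lex.lt_iff, ofLex_toLex, ofLex_toLex]
      rcases hBgain with h | ⟨hle, hcard⟩
      · left
        simp only [hsum0, hsum1]
        linarith
      · rcases lt_or_eq_of_le hle with h | h
        · left
          simp only [hsum0, hsum1]
          linarith
        · right
          constructor
          · simp only [hsum0, hsum1, h]
          · simp only [hcsum0, hcsum1]
            omega
    exact absurd (hmax A' hA'P) (not_le.mpr hlt)
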